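/- With X, C, d̄ as above: let y ∈ C, x ∈ X with x₁ ≤ y₁, and let w ∈ X be any configuration containing the site x₁ (i.e. x₁ = w_j for some j). Then d̄(w, y) ≥ y₁ − x₁. -/
import Mathlib


open scoped BigOperators

/-- Configurations of `n` hard-core particles in `Λ = [-L, L] ∩ ℤ`. -/
abbrev Config (n : ℕ) (L : ℤ) : Type :=
  {x : Fin n → ℤ // StrictMono x ∧ ∀ i, -L ≤ x i ∧ x i ≤ L}

/-- The ℓ¹-distance between configurations. -/
noncomputable def ell1 {n : ℕ} {L : ℤ} (x y : Config n L) : ℝ :=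
  ∑ i, |((x.1 i - y.1 i : ℤ) : ℝ)|

/-- A configuration is clustered iff it consists of consecutive sites. -/
def IsClustered {n : ℕ} {L : ℤ} (x : Config n L) : Prop :=
  ∀ i j : Fin n, x.1 j - x.1 i = (j : ℤ) - (i : ℤ)

/-- `d̄(x,y) = min over clustered w, v of d(x,w) + |w₁ - v₁| + d(v,y)`. -/
noncomputable def dbar {n : ℕ} {L : ℤ} (hn : 0 < n) (x y : Config n L) : ℝ :=
  sInf {r : ℝ | ∃ w v : Config n L, IsClustered w ∧ IsClustered v ∧
    r = ell1 x w + |((w.1 ⟨0, hn⟩ - v.1 ⟨0, hn⟩ : ℤ) : ℝ)| + ell1 v y}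

/-- `D = min{d, d̄}`. -/
noncomputable def Ddist {n : ℕ} {L : ℤ} (hn : 0 < n) (x y : Config n L) : ℝ :=
  min (ell1 x y) (dbar hn x y)

theorem stmt11 (n : ℕ) (L : ℤ) (hn : 0 < n) (hnL : (n : ℤ) ≤ 2 * L + 1)
    (x y w : Config n L) (hy : IsClustered y)
    (hxy : x.1 ⟨0, hn⟩ ≤ y.1 ⟨0, hn⟩)
    (hw : ∃ j : Fin n, w.1 j = x.1 ⟨0, hn⟩) :
    ((y.1 ⟨0, hn⟩ - x.1 ⟨0, hn⟩ : ℤ) : ℝ) ≤ dbar hn w y := by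
  apply le_csInf
  · exact ⟨_, y, y, hy, hy, rfl⟩
  · rintro r ⟨u, v, hu, hv, rfl⟩
    obtain ⟨j, hj⟩ := hw
    -- first term: ell1 w u ≥ u₀ - x₀
    have h1 : ((u.1 ⟨0, hn⟩ - x.1 ⟨0, hn⟩ : ℤ) : ℝ) ≤ ell1 w u := by
      have hterm : |((w.1 j - u.1 j : ℤ) : ℝ)| ≤ ell1 w u :=
        by unfold ell1; exact Finset.single_le_sum (f := fun i => |((w.1 i - u.1 i : ℤ) : ℝ)|) (fun i _ => abs_nonneg _) (Finset.mem_univ j)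
      have hterm' : ((|w.1 j - u.1 j| : ℤ) : ℝ) ≤ ell1 w u := by
        rw [Int.cast_abs]; exact hterm
      refine le_trans (Int.cast_le.mpr ?_) hterm'
      have hcl : u.1 j - u.1 ⟨0, hn⟩ = (j : ℤ) - ((0 : ℕ) : ℤ) := hu ⟨0, hn⟩ j
      have hjn : (0 : ℤ) ≤ (j : ℤ) := Int.natCast_nonneg _
      have habs : -(|w.1 j - u.1 j|) ≤ w.1 j - u.1 j := neg_abs_le _
      simp only [Int.natCast_zero, sub_zero] at hcl
      omega
    -- third term: ell1 v y ≥ y₀ - v₀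
    have h3 : ((y.1 ⟨0, hn⟩ - v.1 ⟨0, hn⟩ : ℤ) : ℝ) ≤ ell1 v y := by
      have hterm : |((v.1 ⟨0, hn⟩ - y.1 ⟨0, hn⟩ : ℤ) : ℝ)| ≤ ell1 v y :=
        by unfold ell1
           exact Finset.single_le_sum (f := fun i => |((v.1 i - y.1 i : ℤ) : ℝ)|) (fun i _ => abs_nonneg _) (Finset.mem_univ (⟨0, hn⟩ : Fin n))
      have := neg_abs_le (((v.1 ⟨0, hn⟩ - y.1 ⟨0, hn⟩ : ℤ) : ℝ))
      push_cast at *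
      linarith
    -- middle term
    have h2 : ((v.1 ⟨0, hn⟩ - u.1 ⟨0, hn⟩ : ℤ) : ℝ) ≤
        |((u.1 ⟨0, hn⟩ - v.1 ⟨0, hn⟩ : ℤ) : ℝ)| := by
      have := neg_abs_le (((u.1 ⟨0, hn⟩ - v.1 ⟨0, hn⟩ : ℤ) : ℝ))
      push_cast at *
      linarith
    push_cast at *
    linarith
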